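/- Let δ ∈ (0, 1/2] and let c be an integer with c ≥ max(32000, 2000·log(1/δ)/δ). Let Y₁, …, Y_K be independent random variables with values in [0,1], let X = Σ_{k=1}^K Y_k, and let X̄ = (1/c)·Σ_{i=1}^c X_i, where X₁, …, X_c are independent copies of X. If E[X] ≤ δ/3 and P[X ≥ δ] = p, then P[X̄ ≥ δ] ≤ p/2. -/

import Mathlib

open MeasureTheory ProbabilityTheory
open scoped ENNReal

section helpers
variable {Ω : Type*} [MeasureSpace Ω] [IsProbabilityMeasure (ℙ : Measure Ω)]

lemma oversampling_numeric_t4000 {δ cr t : ℝ} (hδ0 : 0 < δ) (hδ1 : δ ≤ 1/2)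
    (hc : 32000 ≤ cr) (hlog : 2000 * Real.log (1/δ) ≤ t) (ht : t = cr * δ) :
    4000 ≤ t := by
  rcases le_or_gt δ (1/8) with h | h
  · have h8 : (8:ℝ) ≤ 1/δ := by
      rw [le_div_iff₀ hδ0]; linarith
    have hll : Real.log 8 ≤ Real.log (1/δ) := Real.log_le_log (by norm_num) h8
    have l8 : Real.log 8 = 3 * Real.log 2 := by
      rw [show (8:ℝ) = 2^3 by norm_num, Real.log_pow]; push_cast; ring
    have hl2 : 0.6931471803 < Real.log 2 := Real.log_two_gt_d9
    nlinarith
  · nlinarith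

lemma oversampling_numeric_chernoff {δ cr t : ℝ} (hδ0 : 0 < δ) (hδ1 : δ ≤ 1/2)
    (hc : 32000 ≤ cr) (hlog : 2000 * Real.log (1/δ) ≤ t) (ht : t = cr * δ) :
    cr * Real.exp (t/3 - Real.log 2 * (t/2)) ≤ 1/4 := by
  have ht4 : 4000 ≤ t := oversampling_numeric_t4000 hδ0 hδ1 hc hlog ht
  have ht0 : (0:ℝ) < t := by linarith
  have hl2 : 0.6931471803 < Real.log 2 := Real.log_two_gt_d9
  have hlogt : Real.log t ≤ t/125 := by
    set u := Real.sqrt (Real.sqrt t) with hu_def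
    have hs0 : 0 < Real.sqrt t := Real.sqrt_pos.mpr ht0
    have hu0 : 0 < u := Real.sqrt_pos.mpr hs0
    have hu2 : u^2 = Real.sqrt t := Real.sq_sqrt (Real.sqrt_nonneg t)
    have hst : (Real.sqrt t)^2 = t := Real.sq_sqrt ht0.le
    have hu4 : u^4 = t := by
      calc u^4 = (u^2)^2 := by ring
      _ = t := by rw [hu2, hst]
    have hu : u ≤ t/500 := by
      apply le_of_pow_le_pow_left₀ (n := 4) (by norm_num) (by positivity)
      rw [hu4]
      have h3 : (4000:ℝ)*4000*4000 ≤ t*t*t := by nlinarith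
      nlinarith [h3]
    have hlu : Real.log u ≤ u - 1 := Real.log_le_sub_one_of_pos hu0
    have hlogu : Real.log t = 4 * Real.log u := by
      rw [hu_def, Real.log_sqrt (Real.sqrt_nonneg t), Real.log_sqrt ht0.le]; ring
    nlinarith
  have hlogδ : 1/δ ≤ Real.exp (t/2000) := by
    rw [← Real.exp_log (show (0:ℝ) < 1/δ by positivity)]
    exact Real.exp_le_exp.mpr (by linarith)
  have hcr : cr ≤ t * Real.exp (t/2000) := by
    have hcrδ : cr = t * (1/δ) := by
      field_simp [ht]
      linarith
    rw [hcrδ]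
    exact mul_le_mul_of_nonneg_left hlogδ ht0.le
  have hT : t ≤ Real.exp (t/125) := by
    have h := Real.exp_le_exp.mpr hlogt
    rw [Real.exp_log ht0] at h
    exact h
  have key : cr * Real.exp (t/3 - Real.log 2 * (t/2)) ≤
      Real.exp (t/125 + t/2000 + (t/3 - Real.log 2 * (t/2))) := by
    rw [Real.exp_add, Real.exp_add]
    calc cr * Real.exp (t/3 - Real.log 2 * (t/2))
        ≤ (t * Real.exp (t/2000)) * Real.exp (t/3 - Real.log 2 * (t/2)) := by
          exact mul_le_mul_of_nonneg_right hcr (Real.exp_pos _).le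
      _ ≤ (Real.exp (t/125) * Real.exp (t/2000)) * Real.exp (t/3 - Real.log 2 * (t/2)) := by
          have h1 := (Real.exp_pos (t/2000)).le
          have h2 := (Real.exp_pos (t/3 - Real.log 2 * (t/2))).le
          exact mul_le_mul_of_nonneg_right (mul_le_mul_of_nonneg_right hT h1) h2
  set a : ℝ := Real.log 2 * (t/2) - t/3 - t/2000 - t/125 with ha_def
  have haa : t/125 + t/2000 + (t/3 - Real.log 2 * (t/2)) = -a := by rw [ha_def]; ring
  have ha3 : 3 ≤ a := by rw [ha_def]; nlinarith
  have h4 : (4:ℝ) ≤ Real.exp a := le_trans (by linarith) (Real.add_one_le_exp a)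
  calc cr * Real.exp (t/3 - Real.log 2 * (t/2)) ≤ Real.exp (-a) := by rw [← haa]; exact key
    _ = (Real.exp a)⁻¹ := Real.exp_neg a
    _ ≤ (4:ℝ)⁻¹ := inv_anti₀ (by norm_num) h4
    _ = 1/4 := by norm_num

lemma oversampling_integrable_of_bdd {f : Ω → ℝ} (hf : Measurable f) {C : ℝ}
    (h : ∀ᵐ ω ∂(ℙ : Measure Ω), |f ω| ≤ C) : Integrable f ℙ :=
  (integrable_const C).mono' hf.aestronglyMeasurable (by simpa using h)

lemma oversampling_exp_mul_le_of_Icc {y u : ℝ} (hy : y ∈ Set.Icc (0:ℝ) 1) :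
    Real.exp (u * y) ≤ 1 + (Real.exp u - 1) * y := by
  obtain ⟨hy0, hy1⟩ := hy
  have hcv := convexOn_exp.2 (Set.mem_univ (0:ℝ)) (Set.mem_univ u)
    (by linarith : (0:ℝ) ≤ 1 - y) hy0 (by ring)
  simp only [smul_eq_mul, mul_zero, zero_add, Real.exp_zero, mul_one] at hcv
  have huy : u * y = y * u := by ring
  rw [huy]
  nlinarith [hcv]

lemma oversampling_tail_lemma {K : ℕ} (Y : Fin K → Ω → ℝ)
    (hYmeas : ∀ k, Measurable (Y k))
    (hYrange : ∀ k ω, Y k ω ∈ Set.Icc (0 : ℝ) 1)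
    (hYindep : iIndepFun Y ℙ)
    (X : Ω → ℝ) (hX : X = fun ω => ∑ k, Y k ω)
    {a b : ℝ} (ha : 0 < a) (hb : 0 ≤ b) :
    ℙ {ω | a + b + 1 ≤ X ω} ≤ ℙ {ω | a ≤ X ω} * ℙ {ω | b ≤ X ω} := by
  classical
  set S : ℕ → Ω → ℝ :=
    fun j ω => ∑ k ∈ Finset.univ.filter (fun k : Fin K => (k:ℕ) < j), Y k ω with hS_def
  set T : ℕ → Ω → ℝ :=
    fun j ω => ∑ k ∈ Finset.univ.filter (fun k : Fin K => ¬ (k:ℕ) < j), Y k ω with hT_def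
  have hSmeas : ∀ j, Measurable (S j) :=
    fun j => Finset.measurable_sum _ fun k _ => hYmeas k
  have hST : ∀ j ω, S j ω + T j ω = X ω := by
    intro j ω
    rw [hX]
    exact Finset.sum_filter_add_sum_filter_not _ _ _
  have hSK : ∀ ω, S K ω = X ω := by
    intro ω
    rw [hX]
    apply Finset.sum_congr _ fun _ _ => rfl
    exact Finset.filter_true_of_mem fun k _ => k.isLt
  have hS0 : ∀ ω, S 0 ω = 0 := by
    intro ω
    simp [hS_def]
  have hSnonneg : ∀ j ω, 0 ≤ S j ω :=
    fun j ω => Finset.sum_nonneg fun k _ => (hYrange k ω).1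
  have hTnonneg : ∀ j ω, 0 ≤ T j ω :=
    fun j ω => Finset.sum_nonneg fun k _ => (hYrange k ω).1
  have hSX : ∀ j ω, S j ω ≤ X ω := by
    intro j ω
    have := hST j ω
    have := hTnonneg j ω
    linarith
  have hTX : ∀ j ω, T j ω ≤ X ω := by
    intro j ω
    have := hST j ω
    have := hSnonneg j ω
    linarith
  set A : ℕ → Set Ω := fun j => {ω | a ≤ S j ω ∧ ∀ j' < j, S j' ω < a} with hA_def
  have hA_eq : ∀ j, A j = {ω | a ≤ S j ω} ∩ ⋂ (j' : ℕ) (_ : j' < j), {ω | S j' ω < a} := by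
    intro j
    ext ω
    simp [hA_def, Set.mem_iInter]
  have hAmeas : ∀ j, MeasurableSet (A j) := by
    intro j
    rw [hA_eq]
    exact (measurableSet_le measurable_const (hSmeas j)).inter
      (MeasurableSet.iInter fun j' => MeasurableSet.iInter fun _ =>
        measurableSet_lt (hSmeas j') measurable_const)
  have hind : ∀ j, ℙ (A j ∩ {ω | b ≤ T j ω}) = ℙ (A j) * ℙ {ω | b ≤ T j ω} := by
    intro j
    set Sf : Finset (Fin K) := Finset.univ.filter (fun k : Fin K => (k:ℕ) < j) with hSf_def
    set Tf : Finset (Fin K) := Finset.univ.filter (fun k : Fin K => ¬ (k:ℕ) < j) with hTf_def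
    have hdisj : Disjoint Sf Tf := by
      rw [Finset.disjoint_left]
      intro k hk hk'
      rw [hSf_def, Finset.mem_filter] at hk
      rw [hTf_def, Finset.mem_filter] at hk'
      exact hk'.2 hk.2
    have hIF := hYindep.indepFun_finset Sf Tf hdisj hYmeas
    set φ : ℕ → (Sf → ℝ) → ℝ :=
      fun j' v => ∑ k : Sf, if ((k : Fin K) : ℕ) < j' then v k else 0 with hφ_def
    have hφmeas : ∀ j', Measurable (φ j') := by
      intro j'
      apply Finset.measurable_sum
      intro k _
      by_cases h : ((k : Fin K) : ℕ) < j'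
      · simpa [h] using measurable_pi_apply k
      · simp [h]
    have hφS : ∀ j', j' ≤ j → ∀ ω, φ j' (fun k : Sf => Y k ω) = S j' ω := by
      intro j' hj' ω
      rw [hφ_def]
      simp only
      rw [Finset.sum_coe_sort Sf (fun k => if ((k : Fin K) : ℕ) < j' then Y k ω else 0)]
      rw [← Finset.sum_filter]
      rw [hSf_def, Finset.filter_filter]
      congr 1
      apply Finset.filter_congr
      intro k _
      constructor
      · exact fun h => h.2
      · exact fun h => ⟨lt_of_lt_of_le h hj', h⟩
    set M : Set (Sf → ℝ) := {v | a ≤ φ j v ∧ ∀ j' < j, φ j' v < a} with hM_def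
    have hM : MeasurableSet M := by
      have hMeq : M = {v | a ≤ φ j v} ∩ ⋂ (j' : ℕ) (_ : j' < j), {v | φ j' v < a} := by
        ext v; simp [hM_def, Set.mem_iInter]
      rw [hMeq]
      exact (measurableSet_le measurable_const (hφmeas j)).inter
        (MeasurableSet.iInter fun j' => MeasurableSet.iInter fun _ =>
          measurableSet_lt (hφmeas j') measurable_const)
    set N : Set (Tf → ℝ) := {v | b ≤ ∑ k : Tf, v k} with hN_def
    have hN : MeasurableSet N :=
      measurableSet_le measurable_const (Finset.measurable_sum _ fun k _ => measurable_pi_apply k)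
    have hpre1 : (fun ω (k : Sf) => Y k ω) ⁻¹' M = A j := by
      ext ω
      simp only [Set.mem_preimage, hM_def, Set.mem_setOf_eq, hA_def]
      constructor
      · rintro ⟨h1, h2⟩
        rw [hφS j le_rfl ω] at h1
        refine ⟨h1, fun j' hj' => ?_⟩
        have := h2 j' hj'
        rwa [hφS j' hj'.le ω] at this
      · rintro ⟨h1, h2⟩
        refine ⟨by rwa [hφS j le_rfl ω], fun j' hj' => ?_⟩
        rw [hφS j' hj'.le ω]
        exact h2 j' hj'
    have hpre2 : (fun ω (k : Tf) => Y k ω) ⁻¹' N = {ω | b ≤ T j ω} := by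
      ext ω
      simp only [Set.mem_preimage, hN_def, Set.mem_setOf_eq]
      rw [Finset.sum_coe_sort Tf (fun k => Y k ω)]
    have hmul := hIF.measure_inter_preimage_eq_mul M N hM hN
    rwa [hpre1, hpre2] at hmul
  have hincl : {ω | a + b + 1 ≤ X ω} ⊆
      ⋃ j ∈ Finset.Icc 1 K, A j ∩ {ω | b ≤ T j ω} := by
    intro ω hω
    simp only [Set.mem_setOf_eq] at hω
    have hex : ∃ j, a ≤ S j ω := ⟨K, by rw [hSK]; linarith⟩
    set j := Nat.find hex with hj_def
    have hj : a ≤ S j ω := Nat.find_spec hex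
    have hmin : ∀ j' < j, ¬ a ≤ S j' ω := fun j' h => Nat.find_min hex h
    have hj1 : 1 ≤ j := by
      by_contra h
      push_neg at h
      interval_cases j
      rw [hS0] at hj
      linarith
    have hjK : j ≤ K := Nat.find_min' hex (by rw [hSK]; linarith)
    obtain ⟨m, hm⟩ : ∃ m, j = m + 1 := ⟨j - 1, (Nat.succ_pred_eq_of_pos hj1).symm⟩
    have hmK : m < K := by omega
    have hsplit : Finset.univ.filter (fun k : Fin K => (k:ℕ) < m + 1) =
        insert ⟨m, hmK⟩ (Finset.univ.filter (fun k : Fin K => (k:ℕ) < m)) := by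
      ext k
      simp only [Finset.mem_filter, Finset.mem_univ, true_and, Finset.mem_insert]
      rw [Nat.lt_succ_iff_lt_or_eq, Fin.ext_iff]
      tauto
    have hstep : S (m+1) ω = Y ⟨m, hmK⟩ ω + S m ω := by
      simp only [hS_def]
      rw [hsplit, Finset.sum_insert (by simp)]
    have hSm : S m ω < a := by
      have := hmin m (by omega)
      linarith [not_le.mp this]
    have hSj1 : S j ω < a + 1 := by
      rw [hm, hstep]
      have := (hYrange ⟨m, hmK⟩ ω).2
      linarith
    have hTj : b ≤ T j ω := by
      have := hST j ω
      linarith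
    simp only [Set.mem_iUnion]
    refine ⟨j, ?_, ⟨hj, fun j' hj' => not_le.mp (hmin j' hj')⟩, hTj⟩
    simp only [Finset.mem_Icc]
    exact ⟨hj1, hjK⟩
  have hd : ∀ {i j : ℕ}, i < j → Disjoint (A i) (A j) := by
    intro i j h
    rw [Set.disjoint_left]
    rintro ω ⟨hi, _⟩ ⟨_, hj2⟩
    exact absurd hi (not_le.mpr (hj2 i h))
  have hpd : (↑(Finset.Icc 1 K) : Set ℕ).PairwiseDisjoint A := by
    intro i _ j _ hij
    rcases hij.lt_or_gt with h | h
    · exact hd h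
    · exact (hd h).symm
  calc ℙ {ω | a + b + 1 ≤ X ω}
      ≤ ℙ (⋃ j ∈ Finset.Icc 1 K, A j ∩ {ω | b ≤ T j ω}) := measure_mono hincl
    _ ≤ ∑ j ∈ Finset.Icc 1 K, ℙ (A j ∩ {ω | b ≤ T j ω}) := measure_biUnion_finset_le _ _
    _ = ∑ j ∈ Finset.Icc 1 K, ℙ (A j) * ℙ {ω | b ≤ T j ω} :=
        Finset.sum_congr rfl fun j _ => hind j
    _ ≤ ∑ j ∈ Finset.Icc 1 K, ℙ (A j) * ℙ {ω | b ≤ X ω} := by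
        apply Finset.sum_le_sum
        intro j _
        exact mul_le_mul_right (measure_mono fun ω hω => le_trans hω (hTX j ω)) _
    _ = (∑ j ∈ Finset.Icc 1 K, ℙ (A j)) * ℙ {ω | b ≤ X ω} := (Finset.sum_mul _ _ _).symm
    _ ≤ ℙ {ω | a ≤ X ω} * ℙ {ω | b ≤ X ω} := by
        apply mul_le_mul_left
        rw [← measure_biUnion_finset hpd fun j _ => hAmeas j]
        apply measure_mono
        intro ω hω
        simp only [Set.mem_iUnion] at hω
        obtain ⟨j, _, hj, _⟩ := hω
        exact le_trans hj (hSX j ω)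

lemma oversampling_mgf_X_le {K : ℕ} (Y : Fin K → Ω → ℝ)
    (hYmeas : ∀ k, Measurable (Y k))
    (hYrange : ∀ k ω, Y k ω ∈ Set.Icc (0 : ℝ) 1)
    (hYindep : iIndepFun Y ℙ)
    (X : Ω → ℝ) (hX : X = fun ω => ∑ k, Y k ω)
    {u : ℝ} (hu : 0 ≤ u) {m : ℝ} (hm : ∫ ω, X ω ∂ℙ ≤ m) :
    mgf X ℙ u ≤ Real.exp ((Real.exp u - 1) * m) := by
  have hXfun : X = ∑ k, Y k := by
    rw [hX]; funext ω; simp [Finset.sum_apply]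
  have hYint : ∀ k, Integrable (Y k) ℙ := by
    intro k
    apply oversampling_integrable_of_bdd (hYmeas k)
    filter_upwards with ω
    rw [abs_le]
    exact ⟨by linarith [(hYrange k ω).1], (hYrange k ω).2⟩
  have hint : ∀ k, Integrable (fun ω => Real.exp (u * Y k ω)) ℙ := by
    intro k
    apply oversampling_integrable_of_bdd (C := Real.exp u) ((hYmeas k).const_mul u).exp
    filter_upwards with ω
    rw [abs_of_pos (Real.exp_pos _), Real.exp_le_exp]
    nlinarith [(hYrange k ω).1, (hYrange k ω).2]
  have h1 : ∀ k, mgf (Y k) ℙ u ≤ Real.exp ((Real.exp u - 1) * ∫ ω, Y k ω ∂ℙ) := by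
    intro k
    have hb : mgf (Y k) ℙ u ≤ 1 + (Real.exp u - 1) * ∫ ω, Y k ω ∂ℙ := by
      unfold mgf
      calc ∫ ω, Real.exp (u * Y k ω) ∂ℙ
          ≤ ∫ ω, (1 + (Real.exp u - 1) * Y k ω) ∂ℙ := by
            apply integral_mono (hint k) (by exact (integrable_const 1).add ((hYint k).const_mul _))
            intro ω
            exact oversampling_exp_mul_le_of_Icc (hYrange k ω)
        _ = 1 + (Real.exp u - 1) * ∫ ω, Y k ω ∂ℙ := by
            rw [integral_add (integrable_const 1) ((hYint k).const_mul _),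
              integral_const, MeasureTheory.integral_const_mul]
            simp
    refine hb.trans ?_
    have := Real.add_one_le_exp ((Real.exp u - 1) * ∫ ω, Y k ω ∂ℙ)
    linarith
  have hEsum : ∑ k, ∫ ω, Y k ω ∂ℙ = ∫ ω, X ω ∂ℙ := by
    rw [hX, ← integral_finset_sum _ fun k _ => hYint k]
  rw [hXfun, hYindep.mgf_sum hYmeas]
  calc ∏ k, mgf (Y k) ℙ u
      ≤ ∏ k, Real.exp ((Real.exp u - 1) * ∫ ω, Y k ω ∂ℙ) :=
        Finset.prod_le_prod (fun k _ => mgf_nonneg) (fun k _ => h1 k)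
    _ = Real.exp (∑ k, (Real.exp u - 1) * ∫ ω, Y k ω ∂ℙ) := (Real.exp_sum _ _).symm
    _ = Real.exp ((Real.exp u - 1) * ∫ ω, X ω ∂ℙ) := by
        rw [← Finset.mul_sum, hEsum]
    _ ≤ Real.exp ((Real.exp u - 1) * m) := by
        apply Real.exp_le_exp.mpr
        apply mul_le_mul_of_nonneg_left hm
        nlinarith [Real.add_one_le_exp u]

end helpers



set_option maxHeartbeats 1000000 in
/-- **oversampling lemma.** Let `δ ∈ (0, 1/2]` and let `c` be an integer with
`c ≥ max(32000, 2000·log(1/δ)/δ)`.  Let `Y₁, …, Y_K` be independent random variables with values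
in `[0,1]`, let `X = Σ_k Y_k`, and let `X̄ = (1/c)·Σ_i X_i` where `X₁, …, X_c` are independent
copies of `X`.  If `E[X] ≤ δ/3` and `P[X ≥ δ] = p`, then `P[X̄ ≥ δ] ≤ p/2`. -/

theorem oversampling_lemma
    {Ω : Type*} [MeasureSpace Ω] [IsProbabilityMeasure (ℙ : Measure Ω)]
    (δ : ℝ) (hδ0 : 0 < δ) (hδ1 : δ ≤ 1 / 2)
    (c : ℕ) (hc : max (32000 : ℝ) (2000 * Real.log (1 / δ) / δ) ≤ (c : ℝ))
    {K : ℕ} (Y : Fin K → Ω → ℝ)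
    (hYmeas : ∀ k, Measurable (Y k))
    (hYrange : ∀ k ω, Y k ω ∈ Set.Icc (0 : ℝ) 1)
    (hYindep : iIndepFun Y ℙ)
    (X : Ω → ℝ) (hX : X = fun ω => ∑ k, Y k ω)
    (Xc : Fin c → Ω → ℝ)
    (hXcmeas : ∀ i, Measurable (Xc i))
    (hXcindep : iIndepFun Xc ℙ)
    (hXcdist : ∀ i, Measure.map (Xc i) ℙ = Measure.map X ℙ)
    (Xbar : Ω → ℝ) (hXbar : Xbar = fun ω => (1 / (c : ℝ)) * ∑ i, Xc i ω)
    (p : ℝ≥0∞) (hEX : ∫ ω, X ω ∂ℙ ≤ δ / 3)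
    (hp : ℙ {ω | δ ≤ X ω} = p) :
    ℙ {ω | δ ≤ Xbar ω} ≤ p / 2 := by
  classical
  set cr : ℝ := (c : ℝ) with hcr_def
  have hcr32 : (32000 : ℝ) ≤ cr := le_trans (le_max_left _ _) hc
  have hcr0 : (0:ℝ) < cr := by linarith
  set t : ℝ := cr * δ with ht_def
  have hlogt : 2000 * Real.log (1/δ) ≤ t := by
    have h1 : 2000 * Real.log (1 / δ) / δ ≤ cr := le_trans (le_max_right _ _) hc
    have := mul_le_mul_of_nonneg_right h1 hδ0.le
    rwa [div_mul_cancel₀ _ hδ0.ne'] at this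
  have ht4 : 4000 ≤ t := oversampling_numeric_t4000 hδ0 hδ1 hcr32 hlogt ht_def
  have hXmeas : Measurable X := by
    rw [hX]; exact Finset.measurable_sum _ fun k _ => hYmeas k
  have hXb : ∀ ω, X ω ∈ Set.Icc (0:ℝ) (K:ℝ) := by
    intro ω
    rw [hX]
    constructor
    · exact Finset.sum_nonneg fun k _ => (hYrange k ω).1
    · calc ∑ k, Y k ω ≤ ∑ _k : Fin K, (1:ℝ) :=
          Finset.sum_le_sum fun k _ => (hYrange k ω).2
        _ = (K:ℝ) := by simp
  have hXint : Integrable X ℙ := by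
    apply oversampling_integrable_of_bdd hXmeas (C := (K:ℝ))
    filter_upwards with ω
    rw [abs_le]
    exact ⟨by linarith [(hXb ω).1], (hXb ω).2⟩
  -- transfer of tail probabilities
  have transfer : ∀ (i : Fin c) (s : ℝ), ℙ {ω | s ≤ Xc i ω} = ℙ {ω | s ≤ X ω} := by
    intro i s
    have h1 : {ω | s ≤ Xc i ω} = Xc i ⁻¹' (Set.Ici s) := rfl
    have h2 : {ω | s ≤ X ω} = X ⁻¹' (Set.Ici s) := rfl
    rw [h1, h2, ← Measure.map_apply (hXcmeas i) measurableSet_Ici, hXcdist i,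
      Measure.map_apply hXmeas measurableSet_Ici]
  -- a.e. boundedness of the copies
  have hXcae : ∀ i : Fin c, ∀ᵐ ω ∂(ℙ : Measure Ω), Xc i ω ∈ Set.Icc (0:ℝ) (K:ℝ) := by
    intro i
    have h1 : ℙ (Xc i ⁻¹' Set.Icc (0:ℝ) (K:ℝ)) = ℙ (X ⁻¹' Set.Icc (0:ℝ) (K:ℝ)) := by
      rw [← Measure.map_apply (hXcmeas i) measurableSet_Icc, hXcdist i,
        Measure.map_apply hXmeas measurableSet_Icc]
    have h2 : X ⁻¹' Set.Icc (0:ℝ) (K:ℝ) = Set.univ := by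
      ext ω; simp [hXb ω]
    have h3 : ℙ (Xc i ⁻¹' Set.Icc (0:ℝ) (K:ℝ)) = 1 := by
      rw [h1, h2, measure_univ]
    have h4 : ℙ ((Xc i ⁻¹' Set.Icc (0:ℝ) (K:ℝ))ᶜ) = 0 := by
      rw [measure_compl ((hXcmeas i) measurableSet_Icc) (measure_ne_top _ _), h3]
      simp
    rw [ae_iff]
    convert h4 using 2
    rfl
  have hc0 : 0 < c := by
    by_contra h
    push_neg at h
    interval_cases c
    simp [hcr_def] at hcr32
    linarith
  haveI : Nonempty (Fin c) := ⟨⟨0, hc0⟩⟩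
  -- rewrite the event
  have hE : {ω | δ ≤ Xbar ω} = {ω | cr * δ ≤ ∑ i, Xc i ω} := by
    ext ω
    rw [hXbar]
    simp only [Set.mem_setOf_eq]
    rw [div_mul_eq_mul_div, one_mul, le_div_iff₀ hcr0]
    constructor
    · intro h; linarith
    · intro h; linarith
  -- the two unions
  set B : Fin c → Set Ω := fun i => {ω | δ ≤ Xc i ω} with hB_def
  set C : Fin c → Set Ω := fun i => {ω | cr * δ / 2 ≤ ∑ j ∈ Finset.univ.erase i, Xc j ω}
    with hC_def
  set D : Fin c → Set Ω := fun i => {ω | cr * δ / 2 ≤ Xc i ω} with hD_def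
  have hincl : {ω | δ ≤ Xbar ω} ⊆ (⋃ i, D i) ∪ (⋃ i, B i ∩ C i) := by
    rw [hE]
    intro ω hω
    simp only [Set.mem_setOf_eq] at hω
    by_cases hall : ∀ i, Xc i ω < cr * δ / 2
    · right
      have hex : ∃ i, δ ≤ Xc i ω := by
        by_contra h
        push_neg at h
        have hlt : ∑ i, Xc i ω < ∑ _i : Fin c, δ :=
          Finset.sum_lt_sum_of_nonempty Finset.univ_nonempty fun i _ => h i
        rw [Finset.sum_const, Finset.card_univ, Fintype.card_fin, nsmul_eq_mul] at hlt
        rw [hcr_def] at hω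
        linarith
      obtain ⟨i, hi⟩ := hex
      have hsum : Xc i ω + ∑ j ∈ Finset.univ.erase i, Xc j ω = ∑ j, Xc j ω :=
        Finset.add_sum_erase Finset.univ (fun j => Xc j ω) (Finset.mem_univ i)
      have hCi : cr * δ / 2 ≤ ∑ j ∈ Finset.univ.erase i, Xc j ω := by
        have := hall i
        linarith
      exact Set.mem_iUnion.mpr ⟨i, hi, hCi⟩
    · left
      push_neg at hall
      obtain ⟨i, hi⟩ := hall
      exact Set.mem_iUnion.mpr ⟨i, hi⟩
  -- bound on D i via the tail lemma
  set b' : ℝ := (cr * δ / 2 - δ - 2) / 2 with hb'_def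
  have hb'pos : 0 < b' := by
    rw [hb'_def]
    have : cr * δ = t := rfl
    nlinarith
  have htail1 : ℙ {ω | cr * δ / 2 ≤ X ω} ≤
      ℙ {ω | δ ≤ X ω} * ℙ {ω | (2 * b' + 1) ≤ X ω} := by
    have h := oversampling_tail_lemma Y hYmeas hYrange hYindep X hX hδ0
      (by nlinarith : (0:ℝ) ≤ 2 * b' + 1)
    have hset : {ω | δ + (2 * b' + 1) + 1 ≤ X ω} = {ω | cr * δ / 2 ≤ X ω} := by
      ext ω
      simp only [Set.mem_setOf_eq]
      constructor
      · intro hh; rw [hb'_def] at hh; linarith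
      · intro hh; rw [hb'_def]; linarith
    rwa [hset] at h
  have htail2 : ℙ {ω | (2 * b' + 1) ≤ X ω} ≤ ℙ {ω | b' ≤ X ω} * ℙ {ω | b' ≤ X ω} := by
    have h := oversampling_tail_lemma Y hYmeas hYrange hYindep X hX hb'pos hb'pos.le
    have hset : {ω | b' + b' + 1 ≤ X ω} = {ω | (2 * b' + 1) ≤ X ω} := by
      ext ω
      simp only [Set.mem_setOf_eq]
      constructor <;> (intro hh; linarith)
    rwa [hset] at h
  -- Markov
  have hq : (ℙ {ω | b' ≤ X ω}).toReal ≤ 5 / (3 * cr) := by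
    have hmark := mul_meas_ge_le_integral_of_nonneg
      (Filter.Eventually.of_forall fun ω => (hXb ω).1) hXint b'
    have h1 : b' * (ℙ {ω | b' ≤ X ω}).toReal ≤ δ / 3 := le_trans hmark hEX
    have h2 : (ℙ {ω | b' ≤ X ω}).toReal ≤ δ / (3 * b') := by
      rw [le_div_iff₀ (by positivity)]
      nlinarith
    refine h2.trans ?_
    rw [div_le_div_iff₀ (by positivity) (by positivity)]
    have : cr * δ = t := rfl
    nlinarith
  set q : ℝ≥0∞ := ℙ {ω | b' ≤ X ω} with hq_def
  have hqb : q ≤ ENNReal.ofReal (5 / (3 * cr)) := by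
    have hqt : q ≠ ⊤ := by rw [hq_def]; exact measure_ne_top _ _
    rw [← ENNReal.ofReal_toReal hqt]
    exact ENNReal.ofReal_le_ofReal hq
  have hDbound : ∀ i, ℙ (D i) ≤ p * (ENNReal.ofReal (5 / (3 * cr)) *
      ENNReal.ofReal (5 / (3 * cr))) := by
    intro i
    have hDi : D i = {ω | cr * δ / 2 ≤ Xc i ω} := rfl
    rw [hDi, transfer i]
    calc ℙ {ω | cr * δ / 2 ≤ X ω}
        ≤ ℙ {ω | δ ≤ X ω} * ℙ {ω | (2 * b' + 1) ≤ X ω} := htail1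
      _ ≤ ℙ {ω | δ ≤ X ω} * (q * q) := mul_le_mul_right htail2 _
      _ ≤ p * (ENNReal.ofReal (5 / (3 * cr)) * ENNReal.ofReal (5 / (3 * cr))) := by
          rw [hp]
          exact mul_le_mul_right (mul_le_mul' hqb hqb) _
  -- Chernoff bound for C i
  set R : ℝ := Real.exp (t/3 - Real.log 2 * (t/2)) with hR_def
  have hmgfX : mgf X ℙ (Real.log 2) ≤ Real.exp (δ/3) := by
    have h := oversampling_mgf_X_le Y hYmeas hYrange hYindep X hX
      (Real.log_nonneg (by norm_num) : 0 ≤ Real.log 2) hEX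
    have h2 : ((2:ℝ) - 1) * (δ/3) = δ/3 := by ring
    rwa [Real.exp_log (by norm_num : (0:ℝ) < 2), h2] at h
  have hmgfXc : ∀ i : Fin c, mgf (Xc i) ℙ (Real.log 2) = mgf X ℙ (Real.log 2) := by
    intro i
    unfold mgf
    rw [← integral_map (hXcmeas i).aemeasurable
        (by exact ((measurable_const_mul _).exp).aestronglyMeasurable :
          AEStronglyMeasurable (fun x => Real.exp (Real.log 2 * x)) _),
      hXcdist i,
      integral_map hXmeas.aemeasurable
        (by exact ((measurable_const_mul _).exp).aestronglyMeasurable)]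
  have hCbound : ∀ i, ℙ (C i) ≤ ENNReal.ofReal R := by
    intro i
    set W : Ω → ℝ := ∑ j ∈ Finset.univ.erase i, Xc j with hW_def
    have hWfun : W = fun ω => ∑ j ∈ Finset.univ.erase i, Xc j ω := by
      funext ω; rw [hW_def]; simp [Finset.sum_apply]
    have hWmeas : Measurable W := by
      rw [hWfun]
      exact Finset.measurable_sum _ fun j _ => hXcmeas j
    have hWapp : ∀ ω, W ω = ∑ j ∈ Finset.univ.erase i, Xc j ω := by
      intro ω; rw [hW_def]; simp [Finset.sum_apply]
    have hCW : C i = {ω | cr * δ / 2 ≤ W ω} := by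
      have hCi : C i = {ω | cr * δ / 2 ≤ ∑ j ∈ Finset.univ.erase i, Xc j ω} := rfl
      rw [hCi]
      ext ω
      simp only [Set.mem_setOf_eq, hWapp]
    have hae : ∀ᵐ ω ∂(ℙ : Measure Ω), ∀ j : Fin c, Xc j ω ∈ Set.Icc (0:ℝ) (K:ℝ) :=
      (MeasureTheory.ae_all_iff).mpr hXcae
    have hint : Integrable (fun ω => Real.exp (Real.log 2 * W ω)) ℙ := by
      apply oversampling_integrable_of_bdd ((hWmeas.const_mul _).exp)
        (C := Real.exp (Real.log 2 * (c * K)))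
      filter_upwards [hae] with ω hω
      rw [abs_of_pos (Real.exp_pos _), Real.exp_le_exp]
      apply mul_le_mul_of_nonneg_left _ (Real.log_nonneg (by norm_num))
      rw [hWapp]
      calc ∑ j ∈ Finset.univ.erase i, Xc j ω
          ≤ ∑ _j ∈ Finset.univ.erase i, (K:ℝ) :=
            Finset.sum_le_sum fun j _ => (hω j).2
        _ = (Finset.univ.erase i).card * (K:ℝ) := by rw [Finset.sum_const, nsmul_eq_mul]
        _ ≤ c * K := by
            apply mul_le_mul_of_nonneg_right _ (Nat.cast_nonneg K)
            exact_mod_cast Finset.card_le_card (Finset.subset_univ _) |>.trans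
              (le_of_eq (by simp))
    have hchern := measure_ge_le_exp_mul_mgf (X := W) (μ := ℙ) (t := Real.log 2)
      (cr * δ / 2) (Real.log_nonneg (by norm_num)) hint
    have hmgfW : mgf W ℙ (Real.log 2) ≤ Real.exp (δ/3) ^ (Finset.univ.erase i).card := by
      rw [hW_def, hXcindep.mgf_sum hXcmeas]
      calc ∏ j ∈ Finset.univ.erase i, mgf (Xc j) ℙ (Real.log 2)
          ≤ ∏ _j ∈ Finset.univ.erase i, Real.exp (δ/3) :=
            Finset.prod_le_prod (fun j _ => mgf_nonneg)
              (fun j _ => by rw [hmgfXc j]; exact hmgfX)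
        _ = Real.exp (δ/3) ^ (Finset.univ.erase i).card := Finset.prod_const _
    have hpow : Real.exp (δ/3) ^ (Finset.univ.erase i).card ≤ Real.exp (t/3) := by
      calc Real.exp (δ/3) ^ (Finset.univ.erase i).card
          ≤ Real.exp (δ/3) ^ c := by
            apply pow_le_pow_right₀ (Real.one_le_exp (by positivity))
            exact le_trans (Finset.card_le_card (Finset.subset_univ _)) (le_of_eq (by simp))
        _ = Real.exp (c * (δ/3)) := (Real.exp_nat_mul _ _).symm
        _ = Real.exp (t/3) := by rw [ht_def, hcr_def]; ring_nf
    have hfinal : (ℙ {ω | cr * δ / 2 ≤ W ω}).toReal ≤ R := by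
      refine hchern.trans ?_
      rw [hR_def]
      calc Real.exp (-Real.log 2 * (cr * δ / 2)) * mgf W ℙ (Real.log 2)
          ≤ Real.exp (-Real.log 2 * (cr * δ / 2)) * Real.exp (t/3) := by
            apply mul_le_mul_of_nonneg_left (hmgfW.trans hpow) (Real.exp_pos _).le
        _ = Real.exp (t/3 - Real.log 2 * (t/2)) := by
            rw [← Real.exp_add]
            congr 1
            rw [ht_def]
            ring
    rw [hCW, ← ENNReal.ofReal_toReal (measure_ne_top ℙ {ω | cr * δ / 2 ≤ W ω})]
    exact ENNReal.ofReal_le_ofReal hfinal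
  -- independence of B i and C i
  have hBC : ∀ i, ℙ (B i ∩ C i) = ℙ (B i) * ℙ (C i) := by
    intro i
    have hnm : i ∉ Finset.univ.erase i := Finset.notMem_erase i Finset.univ
    have hI := (hXcindep.indepFun_finset_sum_of_notMem hXcmeas hnm).symm
    have hW : ∀ ω, (∑ j ∈ Finset.univ.erase i, Xc j) ω = ∑ j ∈ Finset.univ.erase i, Xc j ω := by
      intro ω; simp [Finset.sum_apply]
    have h1 : B i = Xc i ⁻¹' Set.Ici δ := rfl
    have h2 : C i = (∑ j ∈ Finset.univ.erase i, Xc j) ⁻¹' Set.Ici (cr * δ / 2) := by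
      have hCi : C i = {ω | cr * δ / 2 ≤ ∑ j ∈ Finset.univ.erase i, Xc j ω} := rfl
      rw [hCi]
      ext ω
      simp only [Set.mem_setOf_eq, Set.mem_preimage, Set.mem_Ici, hW]
    rw [h1, h2]
    exact hI.measure_inter_preimage_eq_mul _ _ measurableSet_Ici measurableSet_Ici
  have hpB : ∀ i, ℙ (B i) = p := by
    intro i
    have hBi : B i = {ω | δ ≤ Xc i ω} := rfl
    rw [hBi, transfer i, hp]
  -- numeric bounds
  have hnum1 : cr * (5 / (3 * cr) * (5 / (3 * cr))) ≤ 1/4 := by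
    rw [show cr * (5 / (3 * cr) * (5 / (3 * cr))) = 25 / (9 * cr) by field_simp; ring]
    rw [div_le_div_iff₀ (by positivity) (by norm_num)]
    nlinarith
  have hnum2 : cr * R ≤ 1/4 :=
    oversampling_numeric_chernoff hδ0 hδ1 hcr32 hlogt ht_def
  -- assembly
  have hcard : ((Finset.univ : Finset (Fin c)).card : ℝ≥0∞) = ENNReal.ofReal cr := by
    rw [Finset.card_univ, Fintype.card_fin, hcr_def, ENNReal.ofReal_natCast]
  calc ℙ {ω | δ ≤ Xbar ω}
      ≤ ℙ ((⋃ i, D i) ∪ (⋃ i, B i ∩ C i)) := measure_mono hincl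
    _ ≤ ℙ (⋃ i, D i) + ℙ (⋃ i, B i ∩ C i) := measure_union_le _ _
    _ ≤ (∑ i, ℙ (D i)) + ∑ i, ℙ (B i ∩ C i) := by
        exact add_le_add (measure_iUnion_fintype_le _ _) (measure_iUnion_fintype_le _ _)
    _ ≤ (∑ _i : Fin c, p * (ENNReal.ofReal (5 / (3 * cr)) * ENNReal.ofReal (5 / (3 * cr))))
        + ∑ _i : Fin c, p * ENNReal.ofReal R := by
        apply add_le_add
        · exact Finset.sum_le_sum fun i _ => hDbound i
        · apply Finset.sum_le_sum
          intro i _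
          rw [hBC i, hpB i]
          exact mul_le_mul_right (hCbound i) _
    _ = p * (ENNReal.ofReal cr * (ENNReal.ofReal (5 / (3 * cr)) * ENNReal.ofReal (5 / (3 * cr))))
        + p * (ENNReal.ofReal cr * ENNReal.ofReal R) := by
        rw [Finset.sum_const, Finset.sum_const, nsmul_eq_mul, nsmul_eq_mul, hcard]
        ring
    _ ≤ p * ENNReal.ofReal (1/4) + p * ENNReal.ofReal (1/4) := by
        apply add_le_add
        · apply mul_le_mul_right
          rw [← ENNReal.ofReal_mul (by positivity), ← ENNReal.ofReal_mul (by positivity)]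
          exact ENNReal.ofReal_le_ofReal (by rw [← mul_assoc] at hnum1 ⊢; nlinarith [hnum1])
        · apply mul_le_mul_right
          rw [← ENNReal.ofReal_mul (by positivity)]
          exact ENNReal.ofReal_le_ofReal hnum2
    _ = p * ENNReal.ofReal (1/2) := by
        rw [← mul_add, ← ENNReal.ofReal_add (by norm_num) (by norm_num)]
        norm_num
    _ = p / 2 := by
        rw [show ENNReal.ofReal (1/2) = 2⁻¹ by
          rw [show (1:ℝ)/2 = (2:ℝ)⁻¹ by norm_num, ENNReal.ofReal_inv_of_pos (by norm_num)]
          norm_num]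
        rw [div_eq_mul_inv]
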